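/- Let F be a finite field and P : F^n → F a polynomial of degree d. If rank(P) ≥ 2r+1, then the Schmidt rank of P is at least r. Here rank(P) is the minimal number m such that P is a function of m polynomials of degree ≤ d−1, and the Schmidt rank of P is the Schmidt rank of its degree-d homogeneous part h(P), namely the minimal s such that h(P) = ∑_{i=1}^{s} Q_i·R_i with deg Q_i, deg R_i < d. -/

import Mathlib

open MvPolynomial

lemma sub_hc_totalDegree {F : Type*} [Field F] {n d : ℕ} (hd : 1 ≤ d)
    (P : MvPolynomial (Fin n) F) (hPd : P.totalDegree = d) :
    (P - homogeneousComponent d P).totalDegree ≤ d - 1 := by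
  rw [totalDegree]
  apply Finset.sup_le
  intro m hm
  rw [mem_support_iff, coeff_sub, coeff_homogeneousComponent] at hm
  have hdeg : (m.sum fun _ e => e) = m.degree := by
    rw [Finsupp.degree, Finsupp.sum]; rfl
  by_cases h : m.degree = d
  · simp [h] at hm
  · simp only [if_neg h, sub_zero] at hm
    have h1 : (m.sum fun _ e => e) ≤ d := hPd ▸ le_totalDegree (mem_support_iff.mpr hm)
    rw [hdeg] at h1 ⊢
    omega

/-- If a degree-`d` polynomial `P` has rank at least `2r+1` (every way of computing
`P` as a function of polynomials of degree `≤ d−1` uses at least `2r+1` of them),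
then the Schmidt rank of `P` — the minimal `s` with
`h(P) = ∑_{i<s} Qᵢ·Rᵢ`, `deg Qᵢ, deg Rᵢ < d`, where `h(P)` is the degree-`d`
homogeneous part — is at least `r`. -/
theorem stmt7 {F : Type*} [Field F] [Fintype F] (n d r : ℕ) (hd : 2 ≤ d)
    (P : MvPolynomial (Fin n) F) (hPd : P.totalDegree = d)
    (hrank : ∀ (m : ℕ) (Q : Fin m → MvPolynomial (Fin n) F) (Γ : (Fin m → F) → F),
      (∀ i, (Q i).totalDegree ≤ d - 1) →
      (∀ x, eval x P = Γ fun i => eval x (Q i)) → 2 * r + 1 ≤ m) :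
    ∀ (s : ℕ) (A B : Fin s → MvPolynomial (Fin n) F),
      (∀ i, (A i).totalDegree < d ∧ (B i).totalDegree < d) →
      homogeneousComponent d P = ∑ i, A i * B i → r ≤ s := by
  intro s A B hAB hsum
  set Q : Fin (2 * s + 1) → MvPolynomial (Fin n) F := fun j =>
    if h : j.val < s then A ⟨j.val, h⟩
    else if h2 : j.val < 2 * s then B ⟨j.val - s, by omega⟩
    else P - homogeneousComponent d P with hQ
  set Γ : (Fin (2 * s + 1) → F) → F := fun v =>
    (∑ i : Fin s, v ⟨i.val, by omega⟩ * v ⟨s + i.val, by omega⟩) + v ⟨2 * s, by omega⟩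
    with hΓ
  have key := hrank (2 * s + 1) Q Γ ?_ ?_
  · omega
  · intro j
    rw [hQ]
    dsimp only
    split_ifs with h1 h2
    · have := (hAB ⟨j.val, h1⟩).1; omega
    · have := (hAB ⟨j.val - s, by omega⟩).2; omega
    · exact sub_hc_totalDegree (by omega) P hPd
  · intro x
    have hP : P = (∑ i, A i * B i) + (P - homogeneousComponent d P) := by
      rw [← hsum]; ring
    rw [hΓ]
    dsimp only
    have e1 : ∀ i : Fin s, Q ⟨i.val, by omega⟩ = A i := by
      intro i; rw [hQ]; exact dif_pos i.isLt
    have e2 : ∀ i : Fin s, Q ⟨s + i.val, by omega⟩ = B i := by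
      intro i
      rw [hQ]
      have h1 : ¬ (s + i.val < s) := by omega
      have h2 : s + i.val < 2 * s := by have := i.isLt; omega
      simp only [dif_neg h1, dif_pos h2]
      congr 1
      ext
      simp
    have e3 : Q ⟨2 * s, by omega⟩ = P - homogeneousComponent d P := by
      rw [hQ]; dsimp only; rw [dif_neg (by omega), dif_neg (by omega)]
    simp only [e1, e2, e3]
    conv_lhs => rw [hP]
    simp [map_sum]
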